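/- Let R be a regular local ring of prime characteristic p > 0 (more generally, a ring in which Frobenius is flat). Then for any ideals I, J ⊆ R and any e ≥ 0, (I : J)^{[p^e]} = (I^{[p^e]} : J^{[p^e]}). -/

import Mathlib

universe u

open Finsupp in
/-- Over a flat module, every solution of a finite system of linear equations with
coefficients in `R` is a linear combination of solutions in `R`. -/
theorem flat_system_solutions {R M : Type u} [CommRing R] [AddCommGroup M] [Module R M]
    [Module.Flat R M] {ι κ : Type u} [Fintype ι] [Fintype κ] [DecidableEq κ]
    (c : ι → κ → R) (m : κ → M) (hm : ∀ j, ∑ v, c j v • m v = 0) :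
    ∃ (σ : Type u) (_ : Fintype σ) (r : σ → κ → R) (y : σ → M),
      (∀ w j, ∑ v, c j v * r w v = 0) ∧ (∀ v, m v = ∑ w, r w v • y w) := by
  classical
  have single_decomp : ∀ (τ : Type u) [Fintype τ] (l : τ →₀ R),
      l = ∑ v, Finsupp.single v (l v) := by
    intro τ _ l
    ext u
    classical
    rw [Finsupp.finset_sum_apply]
    simp [Finsupp.single_apply, Finset.sum_ite_eq]
  let g : ι → (κ →₀ R) := fun j => ∑ v, Finsupp.single v (c j v)
  let fm : (ι →₀ R) →ₗ[R] (κ →₀ R) := Finsupp.linearCombination R g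
  let x : (κ →₀ R) →ₗ[R] M := Finsupp.linearCombination R m
  have hxg : ∀ j, x (g j) = 0 := by
    intro j
    have : x (g j) = ∑ v, c j v • m v := by
      simp only [g, map_sum, x, Finsupp.linearCombination_single]
    rw [this, hm]
  have hcomp : x ∘ₗ fm = 0 := by
    apply Finsupp.lhom_ext
    intro j b
    simp only [LinearMap.comp_apply, LinearMap.zero_apply, fm,
      Finsupp.linearCombination_single, map_smul, hxg, smul_zero]
  obtain ⟨k, a, y', hx, ha⟩ :=
    Module.Flat.exists_factorization_of_comp_eq_zero_of_free hcomp
  refine ⟨ULift.{u} (Fin k), inferInstance, fun w v => a (Finsupp.single v 1) w.down,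
    fun w => y' (Finsupp.single w.down 1), ?_, ?_⟩
  · intro w j
    have h0 : a (fm (Finsupp.single j 1)) = 0 := by
      have := LinearMap.congr_fun ha (Finsupp.single j 1)
      simpa using this
    have h1 : a (fm (Finsupp.single j 1)) = ∑ v, c j v • a (Finsupp.single v 1) := by
      simp only [fm, Finsupp.linearCombination_single, one_smul, g, map_sum]
      congr 1
      ext v
      rw [show Finsupp.single v (c j v) = c j v • Finsupp.single v (1 : R) by
        rw [Finsupp.smul_single, smul_eq_mul, mul_one], map_smul]
    have h2 := congrArg (fun l : Fin k →₀ R => l w.down) (h1 ▸ h0)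
    simp only [Finsupp.coe_zero, Pi.zero_apply] at h2
    rw [Finsupp.finset_sum_apply] at h2
    simpa [smul_eq_mul] using h2
  · intro v
    have hmv : m v = x (Finsupp.single v 1) := by
      simp [x, Finsupp.linearCombination_single]
    refine Eq.trans ?_ (Equiv.ulift.sum_comp
      (fun i => a (Finsupp.single v 1) i • y' (Finsupp.single i 1))).symm
    rw [hmv, hx, LinearMap.comp_apply]
    conv_lhs => rw [show a (Finsupp.single v 1) = ∑ i, Finsupp.single i (a (Finsupp.single v 1) i) by
      ext u
      rw [Finsupp.finset_sum_apply]
      simp [Finsupp.single_apply, Finset.sum_ite_eq]]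
    rw [map_sum]
    refine Finset.sum_congr rfl fun w _ => ?_
    rw [show Finsupp.single w (a (Finsupp.single v 1) w)
        = (a (Finsupp.single v 1) w) • Finsupp.single w (1 : R) by
      rw [Finsupp.smul_single, smul_eq_mul, mul_one], map_smul]

/-- Base change along a flat ring map commutes with colon ideals of finitely
generated ideals. -/
theorem flat_map_colon {R S : Type u} [CommRing R] [CommRing S] (f : R →+* S)
    (hf : f.Flat) {I J : Ideal R} (hI : I.FG) (hJ : J.FG) :
    Ideal.map f (I.colon J) = (Ideal.map f I).colon (Ideal.map f J) := by
  classical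
  letI : Algebra R S := f.toAlgebra
  haveI : Module.Flat R S := hf
  have hsmul : ∀ (r : R) (s : S), r • s = f r * s := fun r s => rfl
  apply le_antisymm
  · rw [Ideal.map_le_iff_le_comap]
    intro r hr
    simp only [Ideal.mem_comap]
    rw [Submodule.mem_colon]
    intro q hq
    have hJspan : Ideal.map f J = Ideal.span (⇑f '' J) := by rw [Ideal.map]
    rw [hJspan, Ideal.span] at hq
    induction hq using Submodule.span_induction with
    | mem z hz =>
        obtain ⟨b, hb, rfl⟩ := hz
        rw [smul_eq_mul, ← map_mul]
        exact Ideal.mem_map_of_mem f (Submodule.mem_colon.1 hr b hb)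
    | zero => simp
    | add z w _ _ hz hw => rw [smul_add]; exact Ideal.add_mem _ hz hw
    | smul c z _ hz =>
        rw [smul_comm]
        exact Submodule.smul_mem _ c hz
  · obtain ⟨A, hA⟩ := hI
    obtain ⟨B, hB⟩ := hJ
    intro s hs
    have key : ∀ b : ↥B, ∃ l : R →₀ S, l ∈ Finsupp.supported S S (↑A : Set R) ∧
        Finsupp.linearCombination S (⇑f) l = s * f (b : R) := by
      intro b
      have hbJ : (b : R) ∈ J := by rw [← hB]; exact Submodule.subset_span b.2
      have h1 : f (b : R) ∈ Ideal.map f J := Ideal.mem_map_of_mem f hbJ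
      have h2 : s * f (b : R) ∈ Ideal.map f I := by
        have := Submodule.mem_colon.1 hs (f (b : R)) h1
        rwa [smul_eq_mul] at this
      rw [← hA, Ideal.map_span, Ideal.span,
        Finsupp.mem_span_image_iff_linearCombination] at h2
      exact h2
    choose l hlsupp hlsum using key
    set κ := Option (↥B × ↥A) with hκ
    set c : ↥B → κ → R := fun b v =>
      v.elim (b : R) (fun q => if q.1 = b then -(q.2 : R) else 0) with hc
    set m : κ → S := fun v => v.elim s (fun q => l q.1 (q.2 : R)) with hm
    have hsum : ∀ b : ↥B, ∑ a : ↥A, ((a : R) • l b (a : R)) = s * f (b : R) := by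
      intro b
      have e1 : ∀ a ∈ A, (a : R) • l b a = l b a • f a := by
        intro a _
        rw [hsmul, smul_eq_mul, mul_comm]
      calc ∑ a : ↥A, ((a : R) • l b (a : R)) = ∑ a ∈ A, (a : R) • l b a :=
            Finset.sum_coe_sort A (fun a => (a : R) • l b a)
        _ = ∑ a ∈ A, l b a • f a := Finset.sum_congr rfl e1
        _ = ∑ a ∈ (l b).support, l b a • f a := by
            refine (Finset.sum_subset (hlsupp b) ?_).symm
            intro a _ ha
            rw [Finsupp.notMem_support_iff.1 ha, zero_smul]
        _ = s * f (b : R) := by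
            have := hlsum b
            rwa [Finsupp.linearCombination_apply, Finsupp.sum] at this
    have heq : ∀ b : ↥B, ∑ v : κ, c b v • m v = 0 := by
      intro b
      rw [Fintype.sum_option]
      have hinner : ∑ q : ↥B × ↥A, c b (some q) • m (some q)
          = ∑ a : ↥A, (-(a : R)) • l b (a : R) := by
        rw [Fintype.sum_prod_type]
        have hrow : ∀ b' : ↥B, ∑ a : ↥A, c b (some (b', a)) • m (some (b', a))
            = if b' = b then ∑ a : ↥A, (-(a : R)) • l b (a : R) else 0 := by
          intro b'
          by_cases h : b' = b
          · subst h; simp [hc, hm]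
          · simp [hc, hm, h]
        rw [Finset.sum_congr rfl (fun b' _ => hrow b')]
        simp
      rw [hinner]
      have hneg : ∑ a : ↥A, (-(a : R)) • l b (a : R)
          = -(s * f (b : R)) := by
        rw [← hsum b, ← Finset.sum_neg_distrib]
        exact Finset.sum_congr rfl (fun a _ => by rw [neg_smul])
      rw [hneg]
      simp only [hc, hm, Option.elim]
      rw [hsmul, mul_comm]
      ring
    obtain ⟨σ, _, r, y, hrc, hmv⟩ := flat_system_solutions c m heq
    have hone : ∀ (w : σ) (b : ↥B), (b : R) * r w none ∈ I := by
      intro w b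
      have h := hrc w b
      rw [Fintype.sum_option] at h
      have hinner2 : ∑ q : ↥B × ↥A, c b (some q) * r w (some q)
          = ∑ a : ↥A, (-(a : R)) * r w (some (b, a)) := by
        rw [Fintype.sum_prod_type]
        have hrow : ∀ b' : ↥B, ∑ a : ↥A, c b (some (b', a)) * r w (some (b', a))
            = if b' = b then ∑ a : ↥A, (-(a : R)) * r w (some (b, a)) else 0 := by
          intro b'
          by_cases h : b' = b
          · subst h; simp [hc]
          · simp [hc, h]
        rw [Finset.sum_congr rfl (fun b' _ => hrow b')]
        simp
      rw [hinner2] at h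
      simp only [hc, Option.elim] at h
      have h2 : (b : R) * r w none = ∑ a : ↥A, (a : R) * r w (some (b, a)) := by
        have h3 := eq_neg_of_add_eq_zero_left h
        rw [h3, ← Finset.sum_neg_distrib]
        exact Finset.sum_congr rfl (fun a _ => by ring)
      rw [h2]
      refine Ideal.sum_mem _ (fun a _ => Ideal.mul_mem_right _ _ ?_)
      rw [← hA]
      exact Submodule.subset_span a.2
    have hrI : ∀ w : σ, r w none ∈ I.colon J := by
      intro w
      rw [Submodule.mem_colon]
      intro q hq
      rw [← hB, Ideal.span] at hq
      induction hq using Submodule.span_induction with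
      | mem z hz =>
          rw [smul_eq_mul, mul_comm]
          exact hone w ⟨z, hz⟩
      | zero => simp
      | add z z' _ _ hz hz' => rw [smul_add]; exact Ideal.add_mem _ hz hz'
      | smul cc z _ hz =>
          rw [smul_comm]
          exact Submodule.smul_mem _ cc hz
    have hs' : s = ∑ w, f (r w none) * y w := by
      have h := hmv none
      simp only [hm, Option.elim] at h
      simpa only [hsmul] using h
    rw [hs']
    exact Ideal.sum_mem _ (fun w _ =>
      Ideal.mul_mem_right _ _ (Ideal.mem_map_of_mem f (hrI w)))

/-- If Frobenius is flat on a Noetherian ring `R` of characteristic `p` (e.g. `R`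
regular local, by Kunz's theorem), then Frobenius powers commute with colon
ideals: `(I : J)^{[p^e]} = (I^{[p^e]} : J^{[p^e]})`. -/
theorem frobenius_power_colon (R : Type*) [CommRing R] [IsNoetherianRing R]
    [IsLocalRing R] (p : ℕ) [Fact p.Prime] [CharP R p]
    (hflat : (frobenius R p).Flat) (I J : Ideal R) (e : ℕ) :
    Ideal.map (iterateFrobenius R p e) (I.colon J) =
      (Ideal.map (iterateFrobenius R p e) I).colon
        (Ideal.map (iterateFrobenius R p e) J) := by
  have hIF : ∀ n, (iterateFrobenius R p n).Flat := by
    intro n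
    induction n with
    | zero =>
        rw [iterateFrobenius_zero]
        exact RingHom.Flat.id R
    | succ n ih =>
        have hstep : iterateFrobenius R p (n + 1)
            = (frobenius R p).comp (iterateFrobenius R p n) := by
          rw [add_comm, iterateFrobenius_add, iterateFrobenius_one]
        rw [hstep]
        exact RingHom.Flat.comp ih hflat
  exact flat_map_colon _ (hIF e) (IsNoetherian.noetherian I) (IsNoetherian.noetherian J)
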